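/- There is a constant d (depending only on the universal machine) such that for all binary strings x and y: C(xy | n_x, n_y) ≥ C(x | n_x) + C(y | x, n_y) − d·(log n_x + log n_y) − d, where xy denotes the concatenation of x and y. (Chain rule lower bound for plain complexity.) -/

import Mathlib

namespace SymInfo

/-- A conditional machine: the input encodes the pair (program, conditional information). -/
abbrev Machine : Type := ℕ →. ℕ

/-- Machine `M` produces string `x` from some program, given condition `cond`. -/
def Produces (M : Machine) (x cond : List Bool) : Prop :=
  ∃ p : List Bool, Encodable.encode x ∈ M (Nat.pair (Encodable.encode p) (Encodable.encode cond))

/-- Conditional plain Kolmogorov complexity of `x` given `cond` w.r.t. `M`: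
the length of a shortest program producing `x` from `cond`. -/
noncomputable def C (M : Machine) (x cond : List Bool) : ℕ :=
  sInf {n | ∃ p : List Bool, p.length = n ∧
    Encodable.encode x ∈ M (Nat.pair (Encodable.encode p) (Encodable.encode cond))}

/-- Binary representation of a natural number. -/
def bin (n : ℕ) : List Bool := n.bits

/-- Standard pairing of two strings, used for conditioning on several objects. -/
def pair2 (a b : List Bool) : List Bool :=
  bin (Nat.pair (Encodable.encode a) (Encodable.encode b))

/-- `U` is a universal machine for plain conditional complexity: it is partial computable,
produces every string under every condition, and simulates every partial computable
machine up to an additive constant. -/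
def IsUniversal (U : Machine) : Prop :=
  Nat.Partrec U ∧ (∀ x cond : List Bool, Produces U x cond) ∧
    ∀ M : Machine, Nat.Partrec M → ∃ c : ℕ, ∀ x cond : List Bool,
      Produces M x cond → C U x cond ≤ C M x cond + c

/-- `C(x | n_x)`: complexity of `x` given (the binary representation of) its length. -/
noncomputable def CL (U : Machine) (x : List Bool) : ℕ := C U x (bin x.length)

/-- `C⁽²⁾(x | n_x) = C(C(x | n_x) | n_x)`. -/
noncomputable def C2 (U : Machine) (x : List Bool) : ℕ := C U (bin (CL U x)) (bin x.length)

/-- `I(x : y) = C(y | n_y) − C(y | x, n_y)`: the information in `x` about `y`. -/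
noncomputable def I (U : Machine) (x y : List Bool) : ℤ :=
  (C U y (bin y.length) : ℤ) - (C U y (pair2 x (bin y.length)) : ℤ)

/-- Base-2 logarithm with the convention `log 0 = 0` (and `log 1 = 0`). -/
def log2 (n : ℕ) : ℕ := Nat.log 2 n



-- ===== auxiliary development =====
open Nat.Partrec (Code)
open Nat.Partrec.Code

/-- Inverse of `Nat.bits`. -/
def ofBits (l : List Bool) : ℕ := l.foldr (fun b n => Nat.bit b n) 0

@[simp] theorem ofBits_nil : ofBits [] = 0 := rfl
@[simp] theorem ofBits_cons (b l) : ofBits (b :: l) = Nat.bit b (ofBits l) := rfl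

theorem ofBits_bits (n : ℕ) : ofBits n.bits = n := by
  induction n using Nat.binaryRec' with
  | zero => simp [Nat.zero_bits]
  | bit b n h ih => rw [Nat.bits_append_bit n b h, ofBits_cons, ih]

theorem bits_ofBits_append_true (p : List Bool) : (ofBits (p ++ [true])).bits = p ++ [true] := by
  induction p with
  | nil =>
      show (Nat.bit true 0).bits = [true]
      simpa using Nat.bit1_bits 0
  | cons b p ih =>
      have hne : ofBits (p ++ [true]) ≠ 0 := by
        intro h
        have := ih
        rw [h] at this
        simp [Nat.zero_bits] at this
      show (Nat.bit b (ofBits (p ++ [true]))).bits = b :: (p ++ [true])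
      rw [Nat.bits_append_bit _ _ (fun h => absurd h hne), ih]

theorem ofBits_append_true_inj {p q : List Bool}
    (h : ofBits (p ++ [true]) = ofBits (q ++ [true])) : p = q := by
  have := bits_ofBits_append_true p
  rw [h, bits_ofBits_append_true q] at this
  exact (List.append_inj_left' this.symm rfl)

theorem ofBits_append_true_lt (p : List Bool) : ofBits (p ++ [true]) < 2 ^ (p.length + 1) := by
  have h := Nat.lt_size_self (ofBits (p ++ [true]))
  rwa [← Nat.size_eq_bits_len, bits_ofBits_append_true, List.length_append] at h

theorem size_le_log2_add_one (n : ℕ) : Nat.size n ≤ Nat.log 2 n + 1 :=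
  Nat.size_le.2 (Nat.lt_pow_succ_log_self (by norm_num) n)

theorem size_add_le (a b : ℕ) : Nat.size (a + b) ≤ Nat.size a + Nat.size b + 1 := by
  refine Nat.size_le.2 ?_
  have ha := Nat.lt_size_self a
  have hb := Nat.lt_size_self b
  have h1 : (2:ℕ) ^ Nat.size a ≤ 2 ^ (Nat.size a + Nat.size b) := Nat.pow_le_pow_right (by norm_num) (by omega)
  have h2 : (2:ℕ) ^ Nat.size b ≤ 2 ^ (Nat.size a + Nat.size b) := Nat.pow_le_pow_right (by norm_num) (by omega)
  calc a + b < 2 ^ Nat.size a + 2 ^ Nat.size b := by omega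
    _ ≤ 2 ^ (Nat.size a + Nat.size b) + 2 ^ (Nat.size a + Nat.size b) := by omega
    _ = 2 ^ (Nat.size a + Nat.size b + 1) := by ring
  
theorem size_pair_le (a b : ℕ) : Nat.size (Nat.pair a b) ≤ 2 * Nat.size a + 2 * Nat.size b + 2 := by
  have hp : Nat.pair a b < (a + b + 1) ^ 2 := by
    rw [Nat.pair]
    split <;> nlinarith
  have hab : a + b + 1 ≤ 2 ^ (Nat.size a + Nat.size b + 1) := by
    have ha := Nat.lt_size_self a
    have hb := Nat.lt_size_self b
    have h1 : (2:ℕ) ^ Nat.size a ≤ 2 ^ (Nat.size a + Nat.size b) := Nat.pow_le_pow_right (by norm_num) (by omega)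
    have h2 : (2:ℕ) ^ Nat.size b ≤ 2 ^ (Nat.size a + Nat.size b) := Nat.pow_le_pow_right (by norm_num) (by omega)
    calc a + b + 1 ≤ 2 ^ Nat.size a + 2 ^ Nat.size b := by omega
      _ ≤ 2 ^ (Nat.size a + Nat.size b + 1) := by
          rw [pow_succ]; omega
  refine Nat.size_le.2 (lt_of_lt_of_le hp ?_)
  calc (a + b + 1) ^ 2 ≤ (2 ^ (Nat.size a + Nat.size b + 1)) ^ 2 := Nat.pow_le_pow_left hab 2
    _ = 2 ^ (2 * Nat.size a + 2 * Nat.size b + 2) := by rw [← pow_mul]; ring_nf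

/-- `bits` via `testBit`. -/
theorem bits_eq_map_testBit (n : ℕ) :
    n.bits = (List.range n.size).map (n.testBit ·) := by
  induction n using Nat.binaryRec' with
  | zero => simp [Nat.zero_bits, Nat.size_zero]
  | bit b m h ih =>
      have hne : Nat.bit b m ≠ 0 := by
        rcases Nat.eq_zero_or_pos m with rfl | hm
        · rw [h rfl]; simp [Nat.bit]
        · exact Nat.bit_ne_zero b (by omega)
      rw [Nat.bits_append_bit m b h, Nat.size_bit hne, List.range_succ_eq_map, List.map_cons,
        List.map_map]
      congr 1
      · simp [Nat.testBit_bit_zero]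
      · rw [ih]
        apply List.map_congr_left
        intro k _
        simp [Function.comp, Nat.testBit_bit_succ]

theorem countP_range_lt (s L : ℕ) :
    (List.range L).countP (fun k => decide (k < s)) = min s L := by
  induction L with
  | zero => simp
  | succ L ih =>
      rw [List.range_succ, List.countP_append, ih]
      simp only [List.countP_cons, List.countP_nil]
      by_cases h : L < s <;> simp [h] <;> omega

theorem size_eq_countP (n : ℕ) :
    Nat.size n = (List.range (n+1)).countP (fun k => decide (2 ^ k ≤ n)) := by
  have h1 : ∀ k, (decide (2 ^ k ≤ n)) = (decide (k < Nat.size n)) := by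
    intro k
    simp [Nat.lt_size]
  calc Nat.size n = min (Nat.size n) (n+1) := by
        have : Nat.size n ≤ n + 1 :=
          Nat.size_le.2 (lt_of_lt_of_le (Nat.lt_two_pow_self (n := n)) (Nat.pow_le_pow_right (by norm_num) (by omega)))
        omega
    _ = (List.range (n+1)).countP (fun k => decide (k < Nat.size n)) := (countP_range_lt _ _).symm
    _ = _ := by
        apply (List.countP_congr _).symm
        intro k _
        simp [h1]

/-- take via getD -/
theorem map_getD_range_eq_take {z : List Bool} {n : ℕ} (h : n ≤ z.length) :
    (List.range n).map (fun q => z.getD q false) = z.take n := by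
  induction z generalizing n with
  | nil => simp at h; simp [h]
  | cons a z ih =>
      cases n with
      | zero => simp
      | succ n =>
          rw [List.range_succ_eq_map, List.map_cons, List.map_map]
          simp only [List.take_succ_cons, List.getD_cons_zero]
          congr 1
          have := ih (n := n) (by simpa using h)
          rw [← this]
          apply List.map_congr_left
          intro k _
          simp [Function.comp]

theorem map_getD_range_eq_drop (z : List Bool) (n : ℕ) :
    (List.range (z.length - n)).map (fun q => z.getD (n + q) false) = z.drop n := by
  induction z generalizing n with
  | nil => simp
  | cons a z ih =>
      cases n with
      | zero =>
          simp only [Nat.zero_add, List.drop_zero, Nat.sub_zero]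
          rw [map_getD_range_eq_take le_rfl, List.take_length]
      | succ n =>
          simp only [List.length_cons, List.drop_succ_cons, Nat.succ_sub_succ]
          rw [← ih n]
          apply List.map_congr_left
          intro k _
          simp [Nat.succ_add]


theorem primrec₂_pow : Primrec₂ ((· ^ ·) : ℕ → ℕ → ℕ) := Primrec₂.unpaired'.1 Nat.Primrec.pow

theorem primrec_bit : Primrec₂ Nat.bit := by
  have : Primrec₂ (fun (b : Bool) (n : ℕ) => bif b then 2 * n + 1 else 2 * n) :=
    Primrec.cond Primrec.fst (Primrec.nat_double_succ.comp Primrec.snd)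
      (Primrec.nat_double.comp Primrec.snd)
  exact this.of_eq fun b n => by cases b <;> rfl

theorem primrec_ofBits : Primrec ofBits :=
  (Primrec.list_foldr Primrec.id (Primrec.const 0)
    (primrec_bit.comp (Primrec.fst.comp Primrec.snd) (Primrec.snd.comp Primrec.snd)).to₂).of_eq
    fun l => rfl

def decL (n : ℕ) : List Bool := (Encodable.decode₂ (List Bool) n).getD []

theorem primrec_decL : Primrec decL :=
  Primrec.option_getD.comp Primrec.decode₂ (Primrec.const [])

@[simp] theorem decL_encode (l : List Bool) : decL (Encodable.encode l) = l := by
  simp [decL, Encodable.decode₂_encode]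

section folds
variable {α : Type*} {β : Type*} [Primcodable α] [Primcodable β]

theorem foldr_count (p : β → Bool) (l : List β) :
    l.foldr (fun k acc => if p k then acc + 1 else acc) 0 = l.countP p := by
  induction l with
  | nil => rfl
  | cons a l ih => by_cases h : p a <;> simp [List.countP_cons, h, ih] <;> omega

theorem foldr_any (p : β → Bool) (l : List β) :
    l.foldr (fun k acc => p k || acc) false = l.any p := by
  induction l with
  | nil => rfl
  | cons a l ih => simp [List.any_cons, ih]

theorem primrec_countP {f : α → List β} {p : α → β → Bool}
    (hf : Primrec f) (hp : Primrec₂ p) : Primrec fun a => (f a).countP (p a) := by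
  have hc : Primrec₂ (fun (a : α) (q : β × ℕ) => if p a q.1 then q.2 + 1 else q.2) :=
    Primrec.ite (Primrec.eq.comp (hp.comp Primrec.fst (Primrec.fst.comp Primrec.snd))
        (Primrec.const true))
      (Primrec.succ.comp (Primrec.snd.comp Primrec.snd)) (Primrec.snd.comp Primrec.snd)
  exact (Primrec.list_foldr hf (Primrec.const 0) hc).of_eq fun a => foldr_count _ _

theorem primrec_anyP {f : α → List β} {p : α → β → Bool}
    (hf : Primrec f) (hp : Primrec₂ p) : Primrec fun a => (f a).any (p a) := by
  have hc : Primrec₂ (fun (a : α) (q : β × Bool) => p a q.1 || q.2) :=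
    Primrec.or.comp (hp.comp Primrec.fst (Primrec.fst.comp Primrec.snd))
      (Primrec.snd.comp Primrec.snd)
  exact (Primrec.list_foldr hf (Primrec.const false) hc).of_eq fun a => foldr_any _ _

/-- least element of `range L` satisfying `p`, or `L` if none. -/
def leastR (p : ℕ → Bool) (L : ℕ) : ℕ := (List.range L).foldr (fun q acc => if p q then q else acc) L

theorem primrec_leastR {f : α → ℕ} {p : α → ℕ → Bool}
    (hf : Primrec f) (hp : Primrec₂ p) : Primrec fun a => leastR (p a) (f a) := by
  have hc : Primrec₂ (fun (a : α) (q : ℕ × ℕ) => if p a q.1 then q.1 else q.2) :=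
    Primrec.ite (Primrec.eq.comp (hp.comp Primrec.fst (Primrec.fst.comp Primrec.snd))
        (Primrec.const true))
      (Primrec.fst.comp Primrec.snd) (Primrec.snd.comp Primrec.snd)
  exact (Primrec.list_foldr (Primrec.list_range.comp hf) hf hc).of_eq fun a => rfl

theorem foldr_least_of_none {p : ℕ → Bool} {L d : ℕ} (h : ∀ r < L, p r = false) :
    (List.range L).foldr (fun q acc => if p q then q else acc) d = d := by
  induction L generalizing d with
  | zero => rfl
  | succ L ih =>
      rw [List.range_succ, List.foldr_append]
      simp only [List.foldr_cons, List.foldr_nil, h L (Nat.lt_succ_self L)]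
      exact ih (fun r hr => h r (hr.trans (Nat.lt_succ_self L))) 

theorem foldr_least_eq {p : ℕ → Bool} {L r0 : ℕ} (h0 : r0 < L) (hp : p r0 = true)
    (hmin : ∀ r < r0, p r = false) :
    ∀ d, (List.range L).foldr (fun q acc => if p q then q else acc) d = r0 := by
  induction L with
  | zero => omega
  | succ L ih =>
      intro d
      rw [List.range_succ, List.foldr_append]
      simp only [List.foldr_cons, List.foldr_nil]
      rcases Nat.lt_or_ge r0 L with h | h
      · exact ih h _
      · have : r0 = L := by omega
        subst this
        rw [hp]
        exact foldr_least_of_none hmin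

theorem leastR_eq {p : ℕ → Bool} {L r0 : ℕ} (h0 : r0 < L) (hp : p r0 = true)
    (hmin : ∀ r < r0, p r = false) : leastR p L = r0 :=
  foldr_least_eq h0 hp hmin L

end folds

theorem primrec_size : Primrec Nat.size := by
  have h : Primrec fun n => (List.range (n+1)).countP (fun k => decide (2 ^ k ≤ n)) :=
    primrec_countP (Primrec.list_range.comp Primrec.succ)
      ((Primrec.nat_le.comp (primrec₂_pow.comp (Primrec.const 2) Primrec.snd) Primrec.fst).decide)
  exact h.of_eq fun n => (size_eq_countP n).symm

theorem primrec_testBit : Primrec₂ Nat.testBit := by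
  have : Primrec₂ fun (n k : ℕ) => decide (n / 2 ^ k % 2 = 1) :=
    Primrec.eq.comp
      (Primrec.nat_mod.comp
        (Primrec.nat_div.comp Primrec.fst (primrec₂_pow.comp (Primrec.const 2) Primrec.snd))
        (Primrec.const 2))
      (Primrec.const 1) |>.decide
  exact this.of_eq fun n k => (Nat.testBit_eq_decide_div_mod_eq).symm

theorem primrec_bin : Primrec bin := by
  have h : Primrec fun n : ℕ => (List.range (Nat.size n)).map (fun k => Nat.testBit n k) :=
    Primrec.list_map (Primrec.list_range.comp primrec_size)
      (primrec_testBit.comp Primrec.fst Primrec.snd)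
  exact h.of_eq fun n => (bits_eq_map_testBit n).symm

def selfD (h : List Bool) : List Bool := (h.flatMap fun b => [b, b]) ++ [true, false]
def prog (hn i : ℕ) : List Bool := selfD (bin hn) ++ bin i

theorem length_flatMap_double (h : List Bool) : (h.flatMap fun b => [b, b]).length = 2 * h.length := by
  induction h with
  | nil => rfl
  | cons b h ih => simp [List.flatMap_cons, ih]; omega

theorem prog_length (hn i : ℕ) : (prog hn i).length = 2 * Nat.size hn + 2 + Nat.size i := by
  simp only [prog, selfD, List.length_append, length_flatMap_double, List.length_cons,
    List.length_nil, bin, ← Nat.size_eq_bits_len]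

theorem dd_getD_lt (h : List Bool) (l : List Bool) (d : Bool) :
    ∀ q < h.length, ((h.flatMap fun b => [b, b]) ++ l).getD (2*q) d = h.getD q d
      ∧ ((h.flatMap fun b => [b, b]) ++ l).getD (2*q+1) d = h.getD q d := by
  induction h generalizing l with
  | nil => intro q hq; simp at hq
  | cons b h ih =>
      intro q hq
      cases q with
      | zero => simp [List.flatMap_cons]
      | succ q =>
          have h2 : 2 * (q+1) = (2*q) + 2 := by omega
          have h3 : 2 * (q+1) + 1 = (2*q+1) + 2 := by omega
          simp only [List.flatMap_cons, List.cons_append, h2, h3]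
          simpa using ih l q (by simpa using hq)

theorem dd_getD_ge (h : List Bool) (l : List Bool) (d : Bool) (j : ℕ) :
    ((h.flatMap fun b => [b, b]) ++ l).getD (2*h.length + j) d = l.getD j d := by
  induction h with
  | nil => simp
  | cons b h ih =>
      have h2 : 2 * (b :: h).length + j = (2 * h.length + j) + 2 := by simp; omega
      simp only [List.flatMap_cons, List.cons_append, h2]
      simpa using ih

def parseHdr (p : List Bool) : ℕ :=
  leastR (fun r => (p.getD (2*r) false) && !(p.getD (2*r+1) true)) p.length
def hdrN (p : List Bool) : ℕ := ofBits ((List.range (parseHdr p)).map (fun q => p.getD (2*q) false))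
def payloadN (p : List Bool) : ℕ :=
  ofBits ((List.range (p.length - (2*parseHdr p + 2))).map (fun q => p.getD (2*parseHdr p + 2 + q) false))

theorem parseHdr_spec (h pl : List Bool) : parseHdr (selfD h ++ pl) = h.length := by
  set p := selfD h ++ pl with hp
  have hlen : p.length = 2 * h.length + 2 + pl.length := by
    simp only [hp, selfD, List.length_append, length_flatMap_double, List.length_cons,
      List.length_nil]
  have hassoc : p = (h.flatMap fun b => [b, b]) ++ (true :: false :: pl) := by
    simp [hp, selfD]
  apply leastR_eq
  · omega
  · have h1 := dd_getD_ge h (true :: false :: pl) false 0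
    have h2 := dd_getD_ge h (true :: false :: pl) true 1
    simp only [Nat.add_zero] at h1
    show ((p.getD (2*h.length) false) && !(p.getD (2*h.length+1) true)) = true
    rw [hassoc, h1, h2]
    rfl
  · intro r hr
    have h1 := (dd_getD_lt h (true :: false :: pl) false r hr).1
    have h2 := (dd_getD_lt h (true :: false :: pl) true r hr).2
    show ((p.getD (2*r) false) && !(p.getD (2*r+1) true)) = false
    rw [hassoc, h1, h2]
    have : h.getD r false = h.getD r true := by
      rw [List.getD_eq_getElem _ _ hr, List.getD_eq_getElem _ _ hr]
    rw [this]
    cases h.getD r true <;> rfl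

theorem hdrN_prog (hn i : ℕ) : hdrN (prog hn i) = hn := by
  unfold hdrN prog
  rw [parseHdr_spec]
  have : (List.range (bin hn).length).map (fun q => (selfD (bin hn) ++ bin i).getD (2*q) false)
      = (List.range (bin hn).length).map (fun q => (bin hn).getD q false) := by
    apply List.map_congr_left
    intro q hq
    rw [List.mem_range] at hq
    have := (dd_getD_lt (bin hn) ((true :: false :: bin i)) false q hq).1
    have hassoc : selfD (bin hn) ++ bin i = ((bin hn).flatMap fun b => [b, b]) ++ (true :: false :: bin i) := by
      simp [selfD]
    rw [hassoc, this]
  rw [this, map_getD_range_eq_take le_rfl, List.take_length]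
  exact ofBits_bits hn

theorem payloadN_prog (hn i : ℕ) : payloadN (prog hn i) = i := by
  unfold payloadN prog
  rw [parseHdr_spec]
  have hlen : (selfD (bin hn) ++ bin i).length - (2 * (bin hn).length + 2) = (bin i).length := by
    simp only [selfD, List.length_append, length_flatMap_double, List.length_cons,
      List.length_nil]
    omega
  rw [hlen]
  have hassoc : selfD (bin hn) ++ bin i = ((bin hn).flatMap fun b => [b, b]) ++ (true :: false :: bin i) := by
    simp [selfD]
  have : (List.range (bin i).length).map (fun q => (selfD (bin hn) ++ bin i).getD (2*(bin hn).length + 2 + q) false)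
      = (List.range (bin i).length).map (fun q => (bin i).getD q false) := by
    apply List.map_congr_left
    intro q _
    have h3 : 2*(bin hn).length + 2 + q = 2*(bin hn).length + (2 + q) := by omega
    rw [hassoc, h3, dd_getD_ge]
    have h4 : (2 : ℕ) + q = (q + 1) + 1 := by omega
    rw [h4, List.getD_cons_succ, List.getD_cons_succ]
  rw [this, map_getD_range_eq_take le_rfl, List.take_length]
  exact ofBits_bits i

theorem primrec_parseHdr : Primrec parseHdr := by
  apply primrec_leastR Primrec.list_length
  apply Primrec.and.comp
  · exact (Primrec.list_getD false).comp Primrec.fst (Primrec.nat_double.comp Primrec.snd)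
  · exact Primrec.not.comp ((Primrec.list_getD true).comp Primrec.fst
      (Primrec.succ.comp (Primrec.nat_double.comp Primrec.snd)))

theorem primrec_hdrN : Primrec hdrN := by
  apply primrec_ofBits.comp
  apply Primrec.list_map (Primrec.list_range.comp primrec_parseHdr)
  exact ((Primrec.list_getD false).comp Primrec.fst (Primrec.nat_double.comp Primrec.snd)).to₂

theorem primrec_payloadN : Primrec payloadN := by
  apply primrec_ofBits.comp
  have hoff : Primrec fun p : List Bool => 2 * parseHdr p + 2 :=
    Primrec.succ.comp (Primrec.succ.comp (Primrec.nat_double.comp primrec_parseHdr))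
  apply Primrec.list_map (Primrec.list_range.comp (Primrec.nat_sub.comp Primrec.list_length hoff))
  exact ((Primrec.list_getD false).comp Primrec.fst
    (Primrec.nat_add.comp (hoff.comp Primrec.fst) Primrec.snd)).to₂

theorem countP_range_eq_card (K : ℕ) (p : ℕ → Bool) :
    (List.range K).countP p = ((Finset.range K).filter (fun k => p k = true)).card := by
  simp [Finset.range, Finset.filter, Multiset.range, List.countP_eq_length_filter]

theorem countP_range_mono {L L' : ℕ} (p : ℕ → Bool) (h : L ≤ L') :
    (List.range L).countP p ≤ (List.range L').countP p := by
  obtain ⟨d, rfl⟩ := Nat.exists_eq_add_of_le h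
  induction d with
  | zero => exact le_rfl
  | succ d ih =>
      rw [← Nat.add_assoc, List.range_succ, List.countP_append]
      omega

section skeleton
variable (Q : ℕ → ℕ → ℕ → Bool)

def nw (a k : ℕ) : Bool := Q a (k.unpair.1 + 1) k.unpair.2 && !(Q a k.unpair.1 k.unpair.2)
def cntnw (a K : ℕ) : ℕ := (List.range K).countP (nw Q a)
def pick (a i : ℕ) : Part ℕ :=
  (Nat.rfind (fun k => Part.some (nw Q a k && decide (cntnw Q a k = i)))).map (fun k => k.unpair.2)
def SQ (a : ℕ) : Set ℕ := {v | ∃ s, Q a s v = true}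

noncomputable def kOf (a v : ℕ) : ℕ := Nat.pair (sInf {s | Q a s v = true} - 1) v
noncomputable def rank (a v : ℕ) : ℕ := cntnw Q a (kOf Q a v)

variable {Q}

theorem qmono' (hmono : ∀ a s v, Q a s v = true → Q a (s+1) v = true)
    (a : ℕ) {s s' v : ℕ} (h : s ≤ s') (hq : Q a s v = true) : Q a s' v = true := by
  obtain ⟨d, rfl⟩ := Nat.exists_eq_add_of_le h
  clear h
  induction d with
  | zero => exact hq
  | succ d ih => exact hmono _ _ _ ih

theorem nw_kOf (hmono : ∀ a s v, Q a s v = true → Q a (s+1) v = true)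
    (h0 : ∀ a v, Q a 0 v = false) {a v : ℕ} (hv : v ∈ SQ Q a) : nw Q a (kOf Q a v) = true := by
  have hmem : sInf {s | Q a s v = true} ∈ {s | Q a s v = true} := Nat.sInf_mem hv
  have hmemq : Q a (sInf {s | Q a s v = true}) v = true := hmem
  have h1 : 1 ≤ sInf {s | Q a s v = true} := by
    rcases Nat.eq_zero_or_pos (sInf {s | Q a s v = true}) with h | h
    · rw [h, h0] at hmemq; exact absurd hmemq (by simp)
    · exact h
  have hnot : Q a (sInf {s | Q a s v = true} - 1) v = false := by
    have h2 := Nat.notMem_of_lt_sInf (show sInf {s | Q a s v = true} - 1 < sInf {s | Q a s v = true} by omega)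
    simpa using h2
  unfold nw kOf
  rw [Nat.unpair_pair]
  simp only
  rw [show sInf {s | Q a s v = true} - 1 + 1 = sInf {s | Q a s v = true} by omega, hmemq, hnot]
  rfl

theorem nw_spec (hmono : ∀ a s v, Q a s v = true → Q a (s+1) v = true)
    {a k : ℕ} (hk : nw Q a k = true) :
    k.unpair.2 ∈ SQ Q a ∧ k = kOf Q a k.unpair.2 := by
  unfold nw at hk
  rw [Bool.and_eq_true, Bool.not_eq_true'] at hk
  obtain ⟨ht, hf⟩ := hk
  refine ⟨⟨_, ht⟩, ?_⟩
  have hle : sInf {s | Q a s k.unpair.2 = true} ≤ k.unpair.1 + 1 := Nat.sInf_le ht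
  have hgt : k.unpair.1 < sInf {s | Q a s k.unpair.2 = true} := by
    by_contra hcon
    push_neg at hcon
    have hmem : sInf {s | Q a s k.unpair.2 = true} ∈ {s | Q a s k.unpair.2 = true} :=
      Nat.sInf_mem ⟨_, ht⟩
    have := qmono' hmono a hcon hmem
    rw [this] at hf
    exact absurd hf (by simp)
  have heq : sInf {s | Q a s k.unpair.2 = true} = k.unpair.1 + 1 := by omega
  unfold kOf
  rw [heq]
  simp [Nat.pair_unpair]

theorem nw_inj (hmono : ∀ a s v, Q a s v = true → Q a (s+1) v = true)
    {a k1 k2 : ℕ} (h1 : nw Q a k1 = true) (h2 : nw Q a k2 = true)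
    (h : k1.unpair.2 = k2.unpair.2) : k1 = k2 := by
  have e1 := (nw_spec hmono h1).2
  have e2 := (nw_spec hmono h2).2
  rw [e1, e2, h]

theorem cntnw_strict {a k1 k2 : ℕ} (hlt : k1 < k2) (h1 : nw Q a k1 = true) :
    cntnw Q a k1 < cntnw Q a k2 := by
  have step : cntnw Q a (k1 + 1) = cntnw Q a k1 + 1 := by
    unfold cntnw
    rw [List.range_succ, List.countP_append]
    simp [h1, List.countP_cons]
  have := countP_range_mono (nw Q a) (show k1 + 1 ≤ k2 from hlt)
  unfold cntnw at *
  omega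

theorem mem_pick (hmono : ∀ a s v, Q a s v = true → Q a (s+1) v = true)
    (h0 : ∀ a v, Q a 0 v = false) {a v : ℕ} (hv : v ∈ SQ Q a) :
    v ∈ pick Q a (rank Q a v) := by
  unfold pick
  have hK : nw Q a (kOf Q a v) = true := nw_kOf hmono h0 hv
  have hmem : kOf Q a v ∈ Nat.rfind (fun k => Part.some (nw Q a k && decide (cntnw Q a k = rank Q a v))) := by
    refine Nat.mem_rfind.2 ?_
    constructor
    · have : (nw Q a (kOf Q a v) && decide (cntnw Q a (kOf Q a v) = rank Q a v)) = true := by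
        rw [hK]
        simp [rank]
      exact this ▸ Part.mem_some _
    · intro m hm
      have : (nw Q a m && decide (cntnw Q a m = rank Q a v)) = false := by
        cases hnw : nw Q a m with
        | false => rfl
        | true =>
            have hstrict := cntnw_strict (a := a) hm hnw
            simp only [hnw, Bool.true_and, decide_eq_false_iff_not, rank]
            exact decide_eq_false (by omega)
      exact this ▸ Part.mem_some _
  rw [Part.mem_map_iff]
  refine ⟨kOf Q a v, hmem, ?_⟩
  unfold kOf
  rw [Nat.unpair_pair]

theorem rank_lt (hmono : ∀ a s v, Q a s v = true → Q a (s+1) v = true)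
    (h0 : ∀ a v, Q a 0 v = false) {a v : ℕ} (hfin : (SQ Q a).Finite) (hv : v ∈ SQ Q a) :
    rank Q a v < (SQ Q a).ncard := by
  have hdfin : (SQ Q a \ {v}).Finite := hfin.subset Set.diff_subset
  have hcard : rank Q a v ≤ (SQ Q a \ {v}).ncard := by
    unfold rank cntnw
    rw [countP_range_eq_card, Set.ncard_eq_toFinset_card _ hdfin]
    apply Finset.card_le_card_of_injOn (fun k => k.unpair.2)
    · intro k hk
      rw [Finset.mem_coe, Finset.mem_filter, Finset.mem_range] at hk
      obtain ⟨hkK, hnw⟩ := hk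
      have hsp := nw_spec hmono hnw
      rw [Finset.mem_coe, Set.Finite.mem_toFinset]
      refine ⟨hsp.1, ?_⟩
      simp only [Set.mem_singleton_iff]
      intro heq
      have : k = kOf Q a v := by rw [hsp.2, heq]
      omega
    · intro k1 hk1 k2 hk2 heq
      rw [Finset.coe_filter, Set.mem_setOf_eq] at hk1 hk2
      exact nw_inj hmono hk1.2 hk2.2 heq
  have := Set.ncard_diff_singleton_lt_of_mem hv hfin
  omega

end skeleton

theorem primrec_nw {Q : ℕ → ℕ → ℕ → Bool}
    (hQ : Primrec fun z : ℕ × ℕ × ℕ => Q z.1 z.2.1 z.2.2) : Primrec₂ (nw Q) := by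
  unfold nw
  apply Primrec.and.comp
  · exact hQ.comp (Primrec.pair Primrec.fst (Primrec.pair
      (Primrec.succ.comp (Primrec.fst.comp (Primrec.unpair.comp Primrec.snd)))
      (Primrec.snd.comp (Primrec.unpair.comp Primrec.snd))))
  · exact Primrec.not.comp (hQ.comp (Primrec.pair Primrec.fst (Primrec.pair
      (Primrec.fst.comp (Primrec.unpair.comp Primrec.snd))
      (Primrec.snd.comp (Primrec.unpair.comp Primrec.snd)))))

theorem primrec_cntnw {Q : ℕ → ℕ → ℕ → Bool}
    (hQ : Primrec fun z : ℕ × ℕ × ℕ => Q z.1 z.2.1 z.2.2) : Primrec₂ (cntnw Q) := by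
  have h : Primrec fun p : ℕ × ℕ => (List.range p.2).countP (nw Q p.1) :=
    primrec_countP (Primrec.list_range.comp Primrec.snd)
      (((primrec_nw hQ).comp (Primrec.fst.comp Primrec.fst) Primrec.snd).to₂ :
        Primrec₂ fun (p : ℕ × ℕ) (k : ℕ) => nw Q p.1 k)
  exact h.to₂.of_eq fun a b => rfl

theorem partrec_pick {Q : ℕ → ℕ → ℕ → Bool}
    (hQ : Primrec fun z : ℕ × ℕ × ℕ => Q z.1 z.2.1 z.2.2) : Partrec₂ (pick Q) := by
  unfold pick
  have hb : Computable₂ fun (ai : ℕ × ℕ) (k : ℕ) =>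
      (nw Q ai.1 k && decide (cntnw Q ai.1 k = ai.2)) :=
    (Primrec.and.comp
      ((primrec_nw hQ).comp (Primrec.fst.comp Primrec.fst) Primrec.snd)
      (Primrec.eq.comp ((primrec_cntnw hQ).comp (Primrec.fst.comp Primrec.fst) Primrec.snd)
        (Primrec.snd.comp Primrec.fst)).decide).to_comp
  have hrf : Partrec fun ai : ℕ × ℕ => Nat.rfind fun k =>
      (Part.some (nw Q ai.1 k && decide (cntnw Q ai.1 k = ai.2))) := by
    apply Partrec.rfind
    exact hb.partrec₂
  have := hrf.map (((Primrec.snd.comp Primrec.unpair).comp Primrec.snd).to_comp.to₂)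
  exact this.to₂

section machines
variable (c : Code)

def okp (m j : ℕ) : Bool := decide ((((Encodable.decode₂ (List Bool) j).map List.length).getD (m+1)) ≤ m)

theorem okp_iff {m j : ℕ} : okp m j = true ↔ ∃ p : List Bool, Encodable.encode p = j ∧ p.length ≤ m := by
  unfold okp
  rcases h : Encodable.decode₂ (List Bool) j with _ | p
  · simp only [h, Option.map_none, Option.getD_none, decide_eq_true_eq]
    constructor
    · omega
    · rintro ⟨p, rfl, _⟩
      rw [Encodable.decode₂_encode] at h
      exact absurd h (by simp)
  · simp only [h, Option.map_some, Option.getD_some, decide_eq_true_eq]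
    constructor
    · intro hle
      exact ⟨p, Encodable.mem_decode₂.1 h, hle⟩
    · rintro ⟨p', rfl, hle⟩
      rw [Encodable.decode₂_encode] at h
      cases h
      exact hle

theorem primrec_okp : Primrec₂ okp := by
  unfold okp
  exact (Primrec.nat_le.comp
    (Primrec.option_getD.comp
      (Primrec.option_map (Primrec.decode₂.comp Primrec.snd) ((Primrec.list_length (α := Bool)).comp Primrec.snd).to₂)
      (Primrec.succ.comp Primrec.fst))
    Primrec.fst).decide

def fnd (m cnd s v : ℕ) : Bool :=
  (List.range s).any (fun j => okp m j && decide (evaln s c (Nat.pair j cnd) = some v))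

theorem fnd_mono {m cnd s v : ℕ} (h : fnd c m cnd s v = true) : fnd c m cnd (s+1) v = true := by
  rw [fnd, List.any_eq_true] at h ⊢
  obtain ⟨j, hj, hok⟩ := h
  rw [Bool.and_eq_true, decide_eq_true_eq] at hok
  have hjr : j ∈ List.range (s+1) := List.mem_range.mpr (by have := List.mem_range.mp hj; omega)
  refine ⟨j, hjr, ?_⟩
  rw [Bool.and_eq_true, decide_eq_true_eq]
  refine ⟨hok.1, ?_⟩
  have : v ∈ evaln s c (Nat.pair j cnd) := hok.2
  exact evaln_mono (Nat.le_succ s) this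

theorem fnd_sound {m cnd s v : ℕ} (h : fnd c m cnd s v = true) :
    ∃ j, okp m j = true ∧ v ∈ c.eval (Nat.pair j cnd) := by
  rw [fnd, List.any_eq_true] at h
  obtain ⟨j, _, hok⟩ := h
  rw [Bool.and_eq_true, decide_eq_true_eq] at hok
  exact ⟨j, hok.1, evaln_sound hok.2⟩

theorem fnd_complete {m cnd j v : ℕ} (hok : okp m j = true)
    (hv : v ∈ c.eval (Nat.pair j cnd)) : ∃ s, fnd c m cnd s v = true := by
  obtain ⟨k, hk⟩ := evaln_complete.1 hv
  refine ⟨max k (j+1), ?_⟩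
  rw [fnd, List.any_eq_true]
  refine ⟨j, List.mem_range.mpr (by omega), ?_⟩
  rw [Bool.and_eq_true, decide_eq_true_eq]
  exact ⟨hok, evaln_mono (le_max_left _ _) hk⟩

theorem primrec_fnd : Primrec fun z : (ℕ × ℕ) × ℕ × ℕ => fnd c z.1.1 z.1.2 z.2.1 z.2.2 := by
  unfold fnd
  apply primrec_anyP (Primrec.list_range.comp (Primrec.fst.comp Primrec.snd))
  apply Primrec.and.comp
  · exact primrec_okp.comp (Primrec.fst.comp (Primrec.fst.comp Primrec.fst)) Primrec.snd
  · refine (Primrec.eq.comp ?_ (Primrec.option_some.comp (Primrec.snd.comp (Primrec.snd.comp Primrec.fst)))).decide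
    exact (primrec_evaln.comp
      (Primrec.pair
        (Primrec.pair ((Primrec.fst.comp Primrec.snd).comp Primrec.fst) (Primrec.const c))
        (Primrec₂.natPair.comp Primrec.snd ((Primrec.snd.comp Primrec.fst).comp Primrec.fst))))

def gd (ex n1 n2 v : ℕ) : Bool :=
  (Encodable.decode₂ (List Bool) v).casesOn false (fun z =>
    decide (z.length = n1 + n2) &&
      decide (Encodable.encode ((List.range n1).map (fun q => z.getD q false)) = ex))


theorem gd_iff {ex n1 n2 v : ℕ} : gd ex n1 n2 v = true ↔
    ∃ z : List Bool, Encodable.encode z = v ∧ z.length = n1 + n2 ∧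
      Encodable.encode (z.take n1) = ex := by
  unfold gd
  rcases h : Encodable.decode₂ (List Bool) v with _ | z
  · simp only []
    constructor
    · intro hh; exact absurd hh (by simp)
    · rintro ⟨z, rfl, _⟩
      rw [Encodable.decode₂_encode] at h
      exact absurd h (by simp)
  · simp only [Bool.and_eq_true, decide_eq_true_eq]
    constructor
    · rintro ⟨hlen, hex⟩
      refine ⟨z, Encodable.mem_decode₂.1 h, hlen, ?_⟩
      rwa [map_getD_range_eq_take (by omega)] at hex
    · rintro ⟨z', rfl, hlen, hex⟩
      rw [Encodable.decode₂_encode] at h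
      cases h
      refine ⟨hlen, ?_⟩
      rwa [map_getD_range_eq_take (by omega)]

theorem primrec_gd : Primrec fun z : (ℕ × ℕ) × ℕ × ℕ => gd z.1.1 z.1.2 z.2.1 z.2.2 := by
  unfold gd
  apply Primrec.option_casesOn (Primrec.decode₂.comp (Primrec.snd.comp Primrec.snd))
    (Primrec.const false)
  apply Primrec.and.comp
  · exact (Primrec.eq.comp (Primrec.list_length.comp Primrec.snd)
      (Primrec.nat_add.comp ((Primrec.snd.comp Primrec.fst).comp Primrec.fst)
        ((Primrec.fst.comp Primrec.snd).comp Primrec.fst))).decide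
  · refine (Primrec.eq.comp (Primrec.encode.comp ?_) ((Primrec.fst.comp Primrec.fst).comp Primrec.fst)).decide
    apply Primrec.list_map
      (Primrec.list_range.comp ((Primrec.snd.comp Primrec.fst).comp Primrec.fst))
    exact ((Primrec.list_getD false).comp (Primrec.snd.comp Primrec.fst) Primrec.snd).to₂

def cnd0 (n1 n2 : ℕ) : ℕ :=
  Encodable.encode (bin (Nat.pair (Encodable.encode (bin n1)) (Encodable.encode (bin n2))))

theorem primrec_cnd0 : Primrec₂ cnd0 := by
  unfold cnd0
  exact (Primrec.encode.comp (primrec_bin.comp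
    (Primrec₂.natPair.comp (Primrec.encode.comp (primrec_bin.comp Primrec.fst))
      (Primrec.encode.comp (primrec_bin.comp Primrec.snd)))))

def n1Of (ce : ℕ) : ℕ := (decL ((ofBits (decL ce)).unpair.1)).length
def n2Of (ce : ℕ) : ℕ := ofBits (decL ((ofBits (decL ce)).unpair.2))
def exOf (ce : ℕ) : ℕ := (ofBits (decL ce)).unpair.1

theorem primrec_n1Of : Primrec n1Of :=
  Primrec.list_length.comp (primrec_decL.comp
    (Primrec.fst.comp (Primrec.unpair.comp (primrec_ofBits.comp primrec_decL))))
theorem primrec_n2Of : Primrec n2Of :=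
  primrec_ofBits.comp (primrec_decL.comp
    (Primrec.snd.comp (Primrec.unpair.comp (primrec_ofBits.comp primrec_decL))))
theorem primrec_exOf : Primrec exOf :=
  Primrec.fst.comp (Primrec.unpair.comp (primrec_ofBits.comp primrec_decL))

def Qa (a s v : ℕ) : Bool :=
  decide (v < s) && gd (exOf a.unpair.2) (n1Of a.unpair.2) (n2Of a.unpair.2) v &&
    fnd c a.unpair.1 (cnd0 (n1Of a.unpair.2) (n2Of a.unpair.2)) s v

def Qb (a s u : ℕ) : Bool :=
  decide (u < s) && decide (2 ^ (a.unpair.1.unpair.2.unpair.1) ≤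
    (List.range s).countP (fun v => gd u (ofBits (decL a.unpair.2)) (a.unpair.1.unpair.2.unpair.2) v &&
      fnd c (a.unpair.1.unpair.1) (cnd0 (ofBits (decL a.unpair.2)) (a.unpair.1.unpair.2.unpair.2)) s v))

theorem Qa_mono : ∀ a s v, Qa c a s v = true → Qa c a (s+1) v = true := by
  intro a s v h
  rw [Qa, Bool.and_eq_true, Bool.and_eq_true] at h ⊢
  exact ⟨⟨by simp at h ⊢; omega, h.1.2⟩, fnd_mono c h.2⟩

theorem Qa_zero : ∀ a v, Qa c a 0 v = false := by
  intro a v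
  rw [Qa]
  simp


theorem Qb_mono : ∀ a s u, Qb c a s u = true → Qb c a (s+1) u = true := by
  intro a s u h
  rw [Qb, Bool.and_eq_true, decide_eq_true_eq, decide_eq_true_eq] at h ⊢
  refine ⟨by omega, ?_⟩
  refine le_trans h.2 ?_
  refine le_trans (List.countP_mono_left ?_) (countP_range_mono _ (Nat.le_succ s))
  intro v _ hv
  rw [Bool.and_eq_true] at hv ⊢
  exact ⟨hv.1, fnd_mono c hv.2⟩

theorem Qb_zero : ∀ a u, Qb c a 0 u = false := by
  intro a u
  rw [Qb]
  simp

theorem primrec_Qa : Primrec fun z : ℕ × ℕ × ℕ => Qa c z.1 z.2.1 z.2.2 := by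
  unfold Qa
  have hce : Primrec fun z : ℕ × ℕ × ℕ => z.1.unpair.2 :=
    Primrec.snd.comp (Primrec.unpair.comp Primrec.fst)
  apply Primrec.and.comp
  · apply Primrec.and.comp
    · exact (Primrec.nat_lt.comp (Primrec.snd.comp Primrec.snd) (Primrec.fst.comp Primrec.snd)).decide
    · exact primrec_gd.comp (Primrec.pair
        (Primrec.pair (primrec_exOf.comp hce) (primrec_n1Of.comp hce))
        (Primrec.pair (primrec_n2Of.comp hce) (Primrec.snd.comp Primrec.snd)))
  · exact (primrec_fnd c).comp (Primrec.pair
      (Primrec.pair (Primrec.fst.comp (Primrec.unpair.comp Primrec.fst))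
        (primrec_cnd0.comp (primrec_n1Of.comp hce) (primrec_n2Of.comp hce)))
      (Primrec.pair (Primrec.fst.comp Primrec.snd) (Primrec.snd.comp Primrec.snd)))

theorem primrec_Qb : Primrec fun z : ℕ × ℕ × ℕ => Qb c z.1 z.2.1 z.2.2 := by
  unfold Qb
  have hce : Primrec fun z : ℕ × ℕ × ℕ => z.1.unpair.2 :=
    Primrec.snd.comp (Primrec.unpair.comp Primrec.fst)
  have hh : Primrec fun z : ℕ × ℕ × ℕ => z.1.unpair.1 :=
    Primrec.fst.comp (Primrec.unpair.comp Primrec.fst)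
  have hm : Primrec fun z : ℕ × ℕ × ℕ => z.1.unpair.1.unpair.1 :=
    Primrec.fst.comp (Primrec.unpair.comp hh)
  have ht : Primrec fun z : ℕ × ℕ × ℕ => z.1.unpair.1.unpair.2.unpair.1 :=
    Primrec.fst.comp (Primrec.unpair.comp (Primrec.snd.comp (Primrec.unpair.comp hh)))
  have hn2 : Primrec fun z : ℕ × ℕ × ℕ => z.1.unpair.1.unpair.2.unpair.2 :=
    Primrec.snd.comp (Primrec.unpair.comp (Primrec.snd.comp (Primrec.unpair.comp hh)))
  have hn1 : Primrec fun z : ℕ × ℕ × ℕ => ofBits (decL z.1.unpair.2) :=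
    primrec_ofBits.comp (primrec_decL.comp hce)
  apply Primrec.and.comp
  · exact (Primrec.nat_lt.comp (Primrec.snd.comp Primrec.snd) (Primrec.fst.comp Primrec.snd)).decide
  · refine (Primrec.nat_le.comp (primrec₂_pow.comp (Primrec.const 2) ht) ?_).decide
    apply primrec_countP (Primrec.list_range.comp (Primrec.fst.comp Primrec.snd))
    apply Primrec.and.comp
    · exact primrec_gd.comp (Primrec.pair
        (Primrec.pair (Primrec.snd.comp (Primrec.snd.comp Primrec.fst)) (hn1.comp Primrec.fst))
        (Primrec.pair (hn2.comp Primrec.fst) Primrec.snd))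
    · exact (primrec_fnd c).comp (Primrec.pair
        (Primrec.pair (hm.comp Primrec.fst)
          (primrec_cnd0.comp (hn1.comp Primrec.fst) (hn2.comp Primrec.fst)))
        (Primrec.pair ((Primrec.fst.comp Primrec.snd).comp Primrec.fst) Primrec.snd))


-- ### the "slice" sets
def SS (m cnd ex n1 n2 : ℕ) : Set ℕ :=
  {v | gd ex n1 n2 v = true ∧ ∃ j, okp m j = true ∧ v ∈ c.eval (Nat.pair j cnd)}

def TT (m cnd : ℕ) : Set ℕ := {v | ∃ j, okp m j = true ∧ v ∈ c.eval (Nat.pair j cnd)}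

theorem SS_subset_TT (m cnd ex n1 n2 : ℕ) : SS c m cnd ex n1 n2 ⊆ TT c m cnd :=
  fun _ hv => hv.2

theorem TT_finite_card (m cnd : ℕ) : (TT c m cnd).Finite ∧ (TT c m cnd).ncard ≤ 2 ^ (m+1) := by
  classical
  have hex : ∀ v ∈ TT c m cnd, ∃ p : List Bool, p.length ≤ m ∧
      v ∈ c.eval (Nat.pair (Encodable.encode p) cnd) := by
    rintro v ⟨j, hok, hv⟩
    obtain ⟨p, rfl, hlen⟩ := okp_iff.1 hok
    exact ⟨p, hlen, hv⟩
  set φ : ℕ → ℕ := fun v =>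
    if h : v ∈ TT c m cnd then ofBits ((hex v h).choose ++ [true]) else 0 with hφ
  have hinj : Set.InjOn φ (TT c m cnd) := by
    intro v1 h1 v2 h2 heq
    rw [hφ] at heq
    simp only [dif_pos h1, dif_pos h2] at heq
    have hpeq := ofBits_append_true_inj heq
    have hv1 := (hex v1 h1).choose_spec.2
    have hv2 := (hex v2 h2).choose_spec.2
    rw [hpeq] at hv1
    exact Part.mem_unique hv1 hv2
  have himg : φ '' (TT c m cnd) ⊆ Set.Iio (2 ^ (m+1)) := by
    rintro _ ⟨v, hv, rfl⟩
    rw [hφ]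
    simp only [dif_pos hv]
    have hlt := ofBits_append_true_lt (hex v hv).choose
    have hlen := (hex v hv).choose_spec.1
    have : (2:ℕ) ^ ((hex v hv).choose.length + 1) ≤ 2 ^ (m+1) :=
      Nat.pow_le_pow_right (by norm_num) (by omega)
    exact Set.mem_Iio.2 (lt_of_lt_of_le hlt this)
  have hfin : (TT c m cnd).Finite :=
    Set.Finite.of_finite_image ((Set.finite_Iio _).subset himg) hinj
  refine ⟨hfin, ?_⟩
  calc (TT c m cnd).ncard = (φ '' (TT c m cnd)).ncard := (Set.ncard_image_of_injOn hinj).symm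
    _ ≤ (Set.Iio (2 ^ (m+1))).ncard := Set.ncard_le_ncard himg (Set.finite_Iio _)
    _ = 2 ^ (m+1) := by
        rw [← Finset.coe_range, Set.ncard_coe_finset, Finset.card_range]

theorem SS_finite (m cnd ex n1 n2 : ℕ) : (SS c m cnd ex n1 n2).Finite :=
  (TT_finite_card c m cnd).1.subset (SS_subset_TT c m cnd ex n1 n2)

theorem SS_disjoint {m cnd n1 n2 ex1 ex2 : ℕ} (h : ex1 ≠ ex2) :
    Disjoint (SS c m cnd ex1 n1 n2) (SS c m cnd ex2 n1 n2) := by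
  rw [Set.disjoint_left]
  rintro v hv1 hv2
  obtain ⟨z1, hz1, _, he1⟩ := gd_iff.1 hv1.1
  obtain ⟨z2, hz2, _, he2⟩ := gd_iff.1 hv2.1
  have : z1 = z2 := Encodable.encode_injective (by rw [hz1, hz2])
  rw [this] at he1
  exact h (he1.symm.trans he2 ▸ rfl)

-- ### characterization of SQ for Qa
theorem SQ_Qa (m ce : ℕ) :
    SQ (Qa c) (Nat.pair m ce) =
      SS c m (cnd0 (n1Of ce) (n2Of ce)) (exOf ce) (n1Of ce) (n2Of ce) := by
  ext v
  simp only [SQ, Set.mem_setOf_eq, SS]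
  constructor
  · rintro ⟨s, hs⟩
    rw [Qa, Nat.unpair_pair] at hs
    simp only [Bool.and_eq_true] at hs
    exact ⟨hs.1.2, fnd_sound c hs.2⟩
  · rintro ⟨hgd, j, hok, hv⟩
    obtain ⟨s0, hs0⟩ := fnd_complete c hok hv
    have hmono' : ∀ d, fnd c m (cnd0 (n1Of ce) (n2Of ce)) (s0 + d) v = true := by
      intro d
      induction d with
      | zero => exact hs0
      | succ d ih => exact fnd_mono c ih
    refine ⟨s0 + (v + 1), ?_⟩
    rw [Qa, Nat.unpair_pair]
    simp only [Bool.and_eq_true]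
    exact ⟨⟨by simp; omega, hgd⟩, hmono' (v+1)⟩

-- ### characterization of SQ for Qb
theorem SQ_Qb (m t n2 ce : ℕ) :
    SQ (Qb c) (Nat.pair (Nat.pair m (Nat.pair t n2)) ce) =
      {u | 2 ^ t ≤ (SS c m (cnd0 (ofBits (decL ce)) n2) u (ofBits (decL ce)) n2).ncard} := by
  set n1 := ofBits (decL ce)
  ext u
  simp only [SQ, Set.mem_setOf_eq]
  constructor
  · rintro ⟨s, hs⟩
    rw [Qb, Nat.unpair_pair, Nat.unpair_pair, Nat.unpair_pair] at hs
    simp only [Bool.and_eq_true, decide_eq_true_eq] at hs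
    refine le_trans hs.2 ?_
    rw [countP_range_eq_card,
      Set.ncard_eq_toFinset_card _ (SS_finite c m (cnd0 n1 n2) u n1 n2)]
    apply Finset.card_le_card
    intro v hv
    rw [Finset.mem_filter] at hv
    rw [Set.Finite.mem_toFinset]
    have := hv.2
    rw [Bool.and_eq_true] at this
    exact ⟨this.1, fnd_sound c this.2⟩
  · intro hcard
    classical
    have hfin := SS_finite c m (cnd0 n1 n2) u n1 n2
    -- choose a stage for every element
    have hstage : ∀ v ∈ SS c m (cnd0 n1 n2) u n1 n2, ∃ s,
        fnd c m (cnd0 n1 n2) s v = true := by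
      rintro v ⟨_, j, hok, hv⟩
      exact fnd_complete c hok hv
    set sv : ℕ → ℕ := fun v =>
      if h : v ∈ SS c m (cnd0 n1 n2) u n1 n2 then (hstage v h).choose else 0 with hsv
    set s0 : ℕ := hfin.toFinset.sup (fun v => max (v + 1) (sv v)) + u + 1 with hs0
    have hfnd_up : ∀ {s s' v}, s ≤ s' → fnd c m (cnd0 n1 n2) s v = true →
        fnd c m (cnd0 n1 n2) s' v = true := by
      intro s s' v hle hf
      obtain ⟨d, rfl⟩ := Nat.exists_eq_add_of_le hle
      clear hle
      induction d with
      | zero => exact hf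
      | succ d ih => exact fnd_mono c ih
    refine ⟨s0, ?_⟩
    rw [Qb, Nat.unpair_pair, Nat.unpair_pair, Nat.unpair_pair]
    simp only [Bool.and_eq_true, decide_eq_true_eq]
    constructor
    · omega
    · refine le_trans hcard ?_
      rw [countP_range_eq_card,
        Set.ncard_eq_toFinset_card _ hfin]
      apply Finset.card_le_card
      intro v hv
      rw [Set.Finite.mem_toFinset] at hv
      rw [Finset.mem_filter, Finset.mem_range]
      have hle : max (v+1) (sv v) ≤ hfin.toFinset.sup (fun v => max (v + 1) (sv v)) :=
        Finset.le_sup (f := fun v => max (v + 1) (sv v)) ((Set.Finite.mem_toFinset hfin).2 hv)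
      constructor
      · omega
      · rw [Bool.and_eq_true]
        refine ⟨hv.1, ?_⟩
        have hfv : fnd c m (cnd0 n1 n2) (sv v) v = true := by
          rw [hsv]
          simp only [dif_pos hv]
          exact (hstage v hv).choose_spec
        exact hfnd_up (by omega) hfv

-- ### cardinality of the Qb-set
theorem Sb_card (m t n1 n2 cnd : ℕ) :
    ({u | 2 ^ t ≤ (SS c m cnd u n1 n2).ncard} : Set ℕ).Finite ∧
      ({u | 2 ^ t ≤ (SS c m cnd u n1 n2).ncard} : Set ℕ).ncard * 2 ^ t ≤ 2 ^ (m+1) := by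
  classical
  set B : Set ℕ := {u | 2 ^ t ≤ (SS c m cnd u n1 n2).ncard} with hB
  obtain ⟨hTfin, hTcard⟩ := TT_finite_card c m cnd
  have hSSfin : ∀ u, (SS c m cnd u n1 n2).Finite := fun u => SS_finite c m cnd u n1 n2
  have hne : ∀ u ∈ B, (SS c m cnd u n1 n2).Nonempty := by
    intro u hu
    rw [hB, Set.mem_setOf_eq] at hu
    have : 0 < (SS c m cnd u n1 n2).ncard := lt_of_lt_of_le (Nat.two_pow_pos t) hu
    exact Set.nonempty_of_ncard_ne_zero (by omega)
  set ψ : ℕ → ℕ := fun u => if h : u ∈ B then (hne u h).some else 0 with hψ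
  have hψ_mem : ∀ u (h : u ∈ B), ψ u ∈ SS c m cnd u n1 n2 := by
    intro u h
    rw [hψ]
    simp only [dif_pos h]
    exact (hne u h).some_mem
  have hinj : Set.InjOn ψ B := by
    intro u1 h1 u2 h2 heq
    by_contra hne'
    have hd := SS_disjoint c (m := m) (cnd := cnd) (n1 := n1) (n2 := n2) hne'
    rw [Set.disjoint_left] at hd
    exact hd (hψ_mem u1 h1) (heq ▸ hψ_mem u2 h2)
  have himg : ψ '' B ⊆ TT c m cnd := by
    rintro _ ⟨u, hu, rfl⟩
    exact SS_subset_TT c m cnd u n1 n2 (hψ_mem u hu)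
  have hBfin : B.Finite := Set.Finite.of_finite_image (hTfin.subset himg) hinj
  refine ⟨hBfin, ?_⟩
  -- biUnion count
  set BF := hBfin.toFinset with hBF
  set tF : ℕ → Finset ℕ := fun u => (hSSfin u).toFinset with htF
  have hdisj : ∀ u1 ∈ BF, ∀ u2 ∈ BF, u1 ≠ u2 → Disjoint (tF u1) (tF u2) := by
    intro u1 _ u2 _ hne'
    rw [htF, Finset.disjoint_left]
    intro v hv1 hv2
    rw [Set.Finite.mem_toFinset] at hv1 hv2
    have hd := SS_disjoint c (m := m) (cnd := cnd) (n1 := n1) (n2 := n2) hne'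
    rw [Set.disjoint_left] at hd
    exact hd hv1 hv2
  have hsub : BF.biUnion tF ⊆ hTfin.toFinset := by
    intro v hv
    rw [Finset.mem_biUnion] at hv
    obtain ⟨u, _, hv⟩ := hv
    rw [htF] at hv
    rw [Set.Finite.mem_toFinset] at hv ⊢
    exact SS_subset_TT c m cnd u n1 n2 hv
  have hlow : BF.card * 2 ^ t ≤ (BF.biUnion tF).card := by
    rw [Finset.card_biUnion hdisj]
    have : ∀ u ∈ BF, 2 ^ t ≤ (tF u).card := by
      intro u hu
      rw [Set.Finite.mem_toFinset] at hu
      rw [htF, ← Set.ncard_eq_toFinset_card _ (hSSfin u)]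
      exact hu
    calc BF.card * 2 ^ t = ∑ _u ∈ BF, 2 ^ t := by rw [Finset.sum_const, smul_eq_mul]
      _ ≤ ∑ u ∈ BF, (tF u).card := Finset.sum_le_sum this
  have hup : (BF.biUnion tF).card ≤ 2 ^ (m+1) := by
    refine le_trans (Finset.card_le_card hsub) ?_
    rw [← Set.ncard_eq_toFinset_card _ hTfin]
    exact hTcard
  have hBcard : B.ncard = BF.card := Set.ncard_eq_toFinset_card _ hBfin
  rw [hBcard]
  exact le_trans hlow hup


end machines

section machines2
variable (c : Nat.Partrec.Code)
def dropE (n1 v : ℕ) : ℕ :=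
  Encodable.encode ((List.range ((decL v).length - n1)).map (fun q => (decL v).getD (n1 + q) false))

theorem dropE_encode (n1 : ℕ) (z : List Bool) :
    dropE n1 (Encodable.encode z) = Encodable.encode (z.drop n1) := by
  unfold dropE
  rw [decL_encode, map_getD_range_eq_drop]

theorem primrec_dropE : Primrec₂ dropE := by
  unfold dropE
  apply Primrec.encode.comp
  have hz : Primrec fun p : ℕ × ℕ => decL p.2 := primrec_decL.comp Primrec.snd
  apply Primrec.list_map
    (Primrec.list_range.comp (Primrec.nat_sub.comp (Primrec.list_length.comp hz) Primrec.fst))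
  exact ((Primrec.list_getD false).comp (hz.comp Primrec.fst)
    (Primrec.nat_add.comp (Primrec.fst.comp Primrec.fst) Primrec.snd)).to₂

noncomputable def Ma : Machine := fun n =>
  (pick (Qa c) (Nat.pair (hdrN (decL n.unpair.1)) n.unpair.2) (payloadN (decL n.unpair.1))).map
    (fun v => dropE (n1Of n.unpair.2) v)

noncomputable def Mb : Machine := fun n =>
  pick (Qb c) (Nat.pair (hdrN (decL n.unpair.1)) n.unpair.2) (payloadN (decL n.unpair.1))

theorem computable_arg1 : Computable fun n : ℕ => Nat.pair (hdrN (decL n.unpair.1)) n.unpair.2 :=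
  (Primrec₂.natPair.comp
    (primrec_hdrN.comp (primrec_decL.comp (Primrec.fst.comp Primrec.unpair)))
    (Primrec.snd.comp Primrec.unpair)).to_comp

theorem computable_arg2 : Computable fun n : ℕ => payloadN (decL n.unpair.1) :=
  (primrec_payloadN.comp (primrec_decL.comp (Primrec.fst.comp Primrec.unpair))).to_comp

theorem partrec_Ma : Nat.Partrec (Ma c) := by
  rw [← Partrec.nat_iff]
  have hpick : Partrec fun n : ℕ =>
      pick (Qa c) (Nat.pair (hdrN (decL n.unpair.1)) n.unpair.2) (payloadN (decL n.unpair.1)) :=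
    (partrec_pick (primrec_Qa c)).comp computable_arg1 computable_arg2
  exact hpick.map ((primrec_dropE.comp
    (primrec_n1Of.comp (Primrec.snd.comp (Primrec.unpair.comp Primrec.fst)))
    Primrec.snd).to_comp.to₂)

theorem partrec_Mb : Nat.Partrec (Mb c) := by
  rw [← Partrec.nat_iff]
  exact (partrec_pick (primrec_Qb c)).comp computable_arg1 computable_arg2

theorem Ma_apply (hn i ce : ℕ) :
    Ma c (Nat.pair (Encodable.encode (prog hn i)) ce) =
      (pick (Qa c) (Nat.pair hn ce) i).map (fun v => dropE (n1Of ce) v) := by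
  unfold Ma
  rw [Nat.unpair_pair]
  simp only [decL_encode, hdrN_prog, payloadN_prog]

theorem Mb_apply (hn i ce : ℕ) :
    Mb c (Nat.pair (Encodable.encode (prog hn i)) ce) = pick (Qb c) (Nat.pair hn ce) i := by
  unfold Mb
  rw [Nat.unpair_pair]
  simp only [decL_encode, hdrN_prog, payloadN_prog]


end machines2


def M0 : Machine := fun n => Part.some n.unpair.1

theorem partrec_M0 : Nat.Partrec M0 := by
  rw [← Partrec.nat_iff]
  have h : Computable fun n : ℕ => n.unpair.1 := (Primrec.fst.comp Primrec.unpair).to_comp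
  exact h.partrec.of_eq fun n => rfl

theorem C_le {M : Machine} {x cond : List Bool} {p : List Bool}
    (h : Encodable.encode x ∈ M (Nat.pair (Encodable.encode p) (Encodable.encode cond))) :
    C M x cond ≤ p.length :=
  Nat.sInf_le ⟨p, rfl, h⟩

-- parameter extraction lemmas
theorem n1Of_ceA (x : List Bool) (n2 : ℕ) :
    n1Of (Encodable.encode (pair2 x (bin n2))) = x.length := by
  unfold n1Of pair2
  rw [decL_encode]
  show (decL ((ofBits (Nat.pair (Encodable.encode x) (Encodable.encode (bin n2))).bits).unpair.1)).length = _
  rw [ofBits_bits, Nat.unpair_pair]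
  simp only [decL_encode]

theorem n2Of_ceA (x : List Bool) (n2 : ℕ) :
    n2Of (Encodable.encode (pair2 x (bin n2))) = n2 := by
  unfold n2Of pair2
  rw [decL_encode]
  show ofBits (decL ((ofBits (Nat.pair (Encodable.encode x) (Encodable.encode (bin n2))).bits).unpair.2)) = _
  rw [ofBits_bits, Nat.unpair_pair]
  simp only [decL_encode]
  exact ofBits_bits n2

theorem exOf_ceA (x : List Bool) (n2 : ℕ) :
    exOf (Encodable.encode (pair2 x (bin n2))) = Encodable.encode x := by
  unfold exOf pair2
  rw [decL_encode]
  show (ofBits (Nat.pair (Encodable.encode x) (Encodable.encode (bin n2))).bits).unpair.1 = _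
  rw [ofBits_bits, Nat.unpair_pair]

theorem ofBits_decL_ceB (n1 : ℕ) : ofBits (decL (Encodable.encode (bin n1))) = n1 := by
  rw [decL_encode]
  exact ofBits_bits n1

set_option maxHeartbeats 2000000 in
/-- Chain rule lower bound for plain complexity:
`C(xy | n_x, n_y) ≥ C(x | n_x) + C(y | x, n_y) − O(log n_x + log n_y)`. -/
theorem chain_rule_lower_bound (U : Machine) (hU : IsUniversal U) :
    ∃ d : ℕ, ∀ x y : List Bool,
      (C U x (bin x.length) : ℤ) + (C U y (pair2 x (bin y.length)) : ℤ)
          - (d : ℤ) * ((log2 x.length : ℤ) + (log2 y.length : ℤ)) - (d : ℤ)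
        ≤ (C U (x ++ y) (pair2 (bin x.length) (bin y.length)) : ℤ) := by
  classical
  obtain ⟨hUpr, hProd, hUniv⟩ := hU
  obtain ⟨c, hc⟩ := exists_code.1 hUpr
  obtain ⟨c0, hc0⟩ := hUniv M0 partrec_M0
  obtain ⟨ca, hca⟩ := hUniv (Ma c) (partrec_Ma c)
  obtain ⟨cb, hcb⟩ := hUniv (Mb c) (partrec_Mb c)
  refine ⟨22 + (ca + cb + 14 * Nat.size c0 + 90), ?_⟩
  intro x y
  set n1 := x.length with hn1
  set n2 := y.length with hn2
  set cndL := pair2 (bin n1) (bin n2) with hcndL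
  set m := C U (x ++ y) cndL with hm
  -- optimal program for xy
  have hne : {n | ∃ p : List Bool, p.length = n ∧
      Encodable.encode (x++y) ∈ U (Nat.pair (Encodable.encode p) (Encodable.encode cndL))}.Nonempty := by
    obtain ⟨p, hp⟩ := hProd (x++y) cndL
    exact ⟨p.length, p, rfl, hp⟩
  have hmm : ∃ p : List Bool, p.length = m ∧
      Encodable.encode (x++y) ∈ U (Nat.pair (Encodable.encode p) (Encodable.encode cndL)) :=
    Nat.sInf_mem hne
  obtain ⟨q, hqlen, hq⟩ := hmm
  -- m ≤ n1 + n2 + c0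
  have hM0mem : Encodable.encode (x++y) ∈
      M0 (Nat.pair (Encodable.encode (x++y)) (Encodable.encode cndL)) := by
    unfold M0
    rw [Nat.unpair_pair]
    exact Part.mem_some _
  have hmUB : m ≤ n1 + n2 + c0 := by
    have h1 := hc0 (x++y) cndL ⟨x++y, hM0mem⟩
    have h2 : C M0 (x++y) cndL ≤ n1 + n2 := by
      have := C_le hM0mem
      rwa [List.length_append] at this
    omega
  -- the condition nat for xy
  have hcnd0 : cnd0 n1 n2 = Encodable.encode cndL := rfl
  -- ===== machine a =====
  set ceA := Encodable.encode (pair2 x (bin n2)) with hceA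
  set aA := Nat.pair m ceA with haA
  have hSQa : SQ (Qa c) aA = SS c m (cnd0 n1 n2) (Encodable.encode x) n1 n2 := by
    rw [haA, SQ_Qa, hceA, n1Of_ceA, n2Of_ceA, exOf_ceA]
  set vstar := Encodable.encode (x ++ y) with hvstar
  have hvA : vstar ∈ SS c m (cnd0 n1 n2) (Encodable.encode x) n1 n2 := by
    refine ⟨gd_iff.2 ⟨x ++ y, rfl, by simp [hn1, hn2], by rw [hn1, List.take_left]⟩, ?_⟩
    refine ⟨Encodable.encode q, okp_iff.2 ⟨q, rfl, le_of_eq hqlen⟩, ?_⟩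
    rw [hc, hcnd0]
    exact hq
  have hfinA : (SS c m (cnd0 n1 n2) (Encodable.encode x) n1 n2).Finite :=
    SS_finite c m (cnd0 n1 n2) (Encodable.encode x) n1 n2
  set e := (SS c m (cnd0 n1 n2) (Encodable.encode x) n1 n2).ncard with he
  have he1 : 1 ≤ e := by
    have : (SS c m (cnd0 n1 n2) (Encodable.encode x) n1 n2).Nonempty := ⟨vstar, hvA⟩
    have := (Set.ncard_pos hfinA).2 this
    omega
  set t := Nat.log 2 e with ht
  set iA := rank (Qa c) aA vstar with hiAdef
  have hiA : iA < e := by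
    have := rank_lt (Qa_mono c) (Qa_zero c) (a := aA) (v := vstar)
      (by rw [hSQa]; exact hfinA) (by rw [hSQa]; exact hvA)
    rwa [hSQa] at this
  have hMaMem : Encodable.encode y ∈
      Ma c (Nat.pair (Encodable.encode (prog m iA)) (Encodable.encode (pair2 x (bin n2)))) := by
    rw [← hceA, Ma_apply]
    have hpk : vstar ∈ pick (Qa c) aA iA :=
      mem_pick (Qa_mono c) (Qa_zero c) (by rw [hSQa]; exact hvA)
    have hval : dropE (n1Of ceA) vstar = Encodable.encode y := by
      rw [hceA, n1Of_ceA, hvstar, dropE_encode, List.drop_left]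
    rw [← hval]
    exact Part.mem_map _ hpk
  have hBnd1 : C U y (pair2 x (bin n2)) ≤ 2 * Nat.size m + 2 + Nat.size iA + ca := by
    have h1 := hca y (pair2 x (bin n2)) ⟨prog m iA, hMaMem⟩
    have h2 : C (Ma c) y (pair2 x (bin n2)) ≤ 2 * Nat.size m + 2 + Nat.size iA := by
      have := C_le hMaMem
      rwa [prog_length] at this
    omega
  have hsizeiA : Nat.size iA ≤ t + 1 := by
    apply Nat.size_le.2
    have : e < 2 ^ (t + 1) := Nat.lt_pow_succ_log_self (by norm_num) e
    omega
  -- ===== machine b =====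
  set ceB := Encodable.encode (bin n1) with hceB
  set aB := Nat.pair (Nat.pair m (Nat.pair t n2)) ceB with haB
  set SB := ({u | 2 ^ t ≤ (SS c m (cnd0 n1 n2) u n1 n2).ncard} : Set ℕ) with hSB
  have hSQb : SQ (Qb c) aB = SB := by
    rw [haB, SQ_Qb, hceB, ofBits_decL_ceB]
  have hxB : Encodable.encode x ∈ SB := by
    rw [hSB]
    show 2 ^ t ≤ e
    exact ht ▸ Nat.pow_log_le_self 2 (by omega)
  obtain ⟨hfinB, hcardB⟩ := Sb_card c m t n1 n2 (cnd0 n1 n2)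
  set iB := rank (Qb c) aB (Encodable.encode x) with hiBdef
  have hiB : iB < SB.ncard := by
    have := rank_lt (Qb_mono c) (Qb_zero c) (a := aB) (v := Encodable.encode x)
      (by rw [hSQb]; exact hfinB) (by rw [hSQb]; exact hxB)
    rwa [hSQb] at this
  have he2 : e ≤ 2 ^ (m + 1) := by
    rw [he]
    exact le_trans (Set.ncard_le_ncard (SS_subset_TT c m (cnd0 n1 n2) _ n1 n2)
      (TT_finite_card c m (cnd0 n1 n2)).1) (TT_finite_card c m (cnd0 n1 n2)).2
  have ht_le : t ≤ m + 1 := by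
    have h2t : 2 ^ t ≤ 2 ^ (m + 1) := le_trans (Nat.pow_log_le_self 2 (by omega)) he2
    exact (Nat.pow_le_pow_iff_right (by norm_num)).1 h2t
  have hsizeiB : Nat.size iB ≤ m + 1 - t := by
    apply Nat.size_le.2
    have hsplit : (2:ℕ) ^ (m + 1) = 2 ^ (m + 1 - t) * 2 ^ t := by
      rw [← pow_add]
      congr 1
      omega
    have h1 : (iB + 1) * 2 ^ t ≤ 2 ^ (m + 1 - t) * 2 ^ t := by
      rw [← hsplit]
      calc (iB + 1) * 2 ^ t ≤ SB.ncard * 2 ^ t := by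
            have : iB + 1 ≤ SB.ncard := hiB
            exact Nat.mul_le_mul_right _ this
        _ ≤ 2 ^ (m + 1) := hcardB
    have h2 : iB + 1 ≤ 2 ^ (m + 1 - t) :=
      Nat.le_of_mul_le_mul_right h1 (Nat.two_pow_pos t)
    omega
  have hMbMem : Encodable.encode x ∈
      Mb c (Nat.pair (Encodable.encode (prog (Nat.pair m (Nat.pair t n2)) iB))
        (Encodable.encode (bin n1))) := by
    rw [← hceB, Mb_apply]
    exact mem_pick (Qb_mono c) (Qb_zero c) (by rw [hSQb]; exact hxB)
  have hBnd2 : C U x (bin n1) ≤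
      2 * Nat.size (Nat.pair m (Nat.pair t n2)) + 2 + (m + 1 - t) + cb := by
    have h1 := hcb x (bin n1) ⟨prog (Nat.pair m (Nat.pair t n2)) iB, hMbMem⟩
    have h2 : C (Mb c) x (bin n1) ≤
        2 * Nat.size (Nat.pair m (Nat.pair t n2)) + 2 + Nat.size iB := by
      have := C_le hMbMem
      rwa [prog_length] at this
    omega
  -- ===== arithmetic =====
  have hsp : Nat.size (Nat.pair m (Nat.pair t n2)) ≤
      2 * Nat.size m + 4 * Nat.size t + 4 * Nat.size n2 + 6 := by
    have h1 := size_pair_le m (Nat.pair t n2)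
    have h2 := size_pair_le t n2
    omega
  have hst : Nat.size t ≤ Nat.size m + 1 := by
    have h1 : Nat.size t ≤ Nat.size (m + 1) := Nat.size_le_size ht_le
    have h2 : Nat.size (m+1) ≤ Nat.size m + 1 := by
      apply Nat.size_le.2
      have := Nat.lt_size_self m
      rw [pow_succ]
      omega
    omega
  have hsm : Nat.size m ≤ Nat.size n1 + Nat.size n2 + Nat.size c0 + 2 := by
    have h1 : Nat.size m ≤ Nat.size (n1 + n2 + c0) := Nat.size_le_size hmUB
    have h2 := size_add_le (n1 + n2) c0
    have h3 := size_add_le n1 n2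
    omega
  have hsn1 : Nat.size n1 ≤ log2 n1 + 1 := size_le_log2_add_one n1
  have hsn2 : Nat.size n2 ≤ log2 n2 + 1 := size_le_log2_add_one n2
  have hNat : C U x (bin n1) + C U y (pair2 x (bin n2)) ≤
      m + 22 * log2 n1 + 22 * log2 n2 + (ca + cb + 14 * Nat.size c0 + 90) := by
    omega
  -- cast to ℤ
  have hcast : (C U x (bin n1) : ℤ) + (C U y (pair2 x (bin n2)) : ℤ) ≤
      (m : ℤ) + 22 * (log2 n1 : ℤ) + 22 * (log2 n2 : ℤ) +
        ((ca : ℤ) + cb + 14 * (Nat.size c0 : ℤ) + 90) := by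
    exact_mod_cast hNat
  have hL1 : (0:ℤ) ≤ (log2 n1 : ℤ) := Int.ofNat_nonneg _
  have hL2 : (0:ℤ) ≤ (log2 n2 : ℤ) := Int.ofNat_nonneg _
  have hKpos : (0:ℤ) ≤ ((ca + cb + 14 * Nat.size c0 + 90 : ℕ) : ℤ) := Int.ofNat_nonneg _
  push_cast
  push_cast at hcast hKpos
  nlinarith [mul_nonneg hKpos (add_nonneg hL1 hL2)]


end SymInfo
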